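/- Let x_1,…,x_n ∈ ℝ^n be nonzero pairwise orthogonal vectors with min_i ‖x_i‖² > (r/n)·H, H the harmonic mean of the squared norms. Then for any rank-≤r orthogonal projection P on ℝ^n, min_i x_i^T P x_i ≤ (r/n)·H, and this bound is attained by some semi-orthogonal U with P = UU^T whose rows in the normalized target basis have squared norms (r/n)·H/‖x_i‖². -/

import Mathlib

open Matrix BigOperators

def GoodW {n r : ℕ} (d : Fin n → ℝ) (W : Matrix (Fin n) (Fin r) ℝ) : Prop :=
  Wᵀ * W = 1 ∧ ∀ i, ∑ l, W i l ^ 2 = d i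

lemma mulT_apply {n r : ℕ} (W : Matrix (Fin n) (Fin r) ℝ) (l l' : Fin r) :
    (Wᵀ * W) l l' = ∑ i, W i l * W i l' := by
  simp [Matrix.mul_apply]

lemma goodW_dropZero {n r : ℕ} {d : Fin (n+1) → ℝ} (hd : d (Fin.last n) = 0)
    {W' : Matrix (Fin n) (Fin r) ℝ} (h : GoodW (fun k => d k.castSucc) W') :
    ∃ W : Matrix (Fin (n+1)) (Fin r) ℝ, GoodW d W := by
  obtain ⟨W', rfl⟩ : ∃ f : Fin n → Fin r → ℝ, f = W' := ⟨W', rfl⟩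
  refine ⟨Fin.snoc W' 0, ?_, ?_⟩
  · ext l l'
    erw [mulT_apply, Fin.sum_univ_castSucc]
    simp only [Fin.snoc_castSucc, Fin.snoc_last, Pi.zero_apply, mul_zero, add_zero]
    rw [← h.1, mulT_apply W']
  · intro i
    induction i using Fin.lastCases with
    | last => simp [Fin.snoc_last, hd]
    | cast k => simpa [Fin.snoc_castSucc] using h.2 k

lemma goodW_dropOne {n r : ℕ} {d : Fin (n+1) → ℝ} (hd : d (Fin.last n) = 1)
    {W' : Matrix (Fin n) (Fin r) ℝ} (h : GoodW (fun k => d k.castSucc) W') :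
    ∃ W : Matrix (Fin (n+1)) (Fin (r+1)) ℝ, GoodW d W := by
  obtain ⟨W', rfl⟩ : ∃ f : Fin n → Fin r → ℝ, f = W' := ⟨W', rfl⟩
  refine ⟨Fin.snoc (fun i => Fin.snoc (W' i) 0) (Fin.snoc (0 : Fin r → ℝ) 1), ?_, ?_⟩
  · ext l l'
    erw [mulT_apply, Fin.sum_univ_castSucc]
    simp only [Fin.snoc_castSucc, Fin.snoc_last]
    induction l using Fin.lastCases with
    | last =>
      induction l' using Fin.lastCases with
      | last => simp [Matrix.one_apply]
      | cast v => simp [Fin.snoc_castSucc, Fin.snoc_last,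
          Matrix.one_apply, (Fin.castSucc_lt_last v).ne']
    | cast u =>
      induction l' using Fin.lastCases with
      | last => simp [Fin.snoc_castSucc, Fin.snoc_last,
          Matrix.one_apply, (Fin.castSucc_lt_last u).ne]
      | cast v =>
        simp only [Fin.snoc_castSucc, Fin.snoc_last, Pi.zero_apply, zero_mul, add_zero]
        have := congrFun (congrFun h.1 u) v
        rw [mulT_apply W'] at this
        rw [this]
        simp [Matrix.one_apply, Fin.castSucc_inj]
  · intro i
    induction i using Fin.lastCases with
    | last =>
      rw [Fin.snoc_last, Fin.sum_univ_castSucc]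
      simp [Fin.snoc_castSucc, Fin.snoc_last, hd]
    | cast k =>
      rw [Fin.snoc_castSucc, Fin.sum_univ_castSucc]
      simpa [Fin.snoc_castSucc, Fin.snoc_last] using h.2 k

lemma goodW_mergeA {n r : ℕ} {d : Fin (n+2) → ℝ}
    (ha : 0 ≤ d (Fin.last n).castSucc) (hb : 0 < d (Fin.last (n+1)))
    {W' : Matrix (Fin (n+1)) (Fin r) ℝ}
    (h : GoodW (Fin.snoc (fun k : Fin n => d k.castSucc.castSucc)
      (d (Fin.last n).castSucc + d (Fin.last (n+1)))) W') :
    ∃ W : Matrix (Fin (n+2)) (Fin r) ℝ, GoodW d W := by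
  obtain ⟨W', rfl⟩ : ∃ f : Fin (n+1) → Fin r → ℝ, f = W' := ⟨W', rfl⟩
  set a := d (Fin.last n).castSucc with hadef
  set b := d (Fin.last (n+1)) with hbdef
  have hs0 : 0 < a + b := by linarith
  set w := W' (Fin.last n) with hwdef
  have hw : ∑ l, w l ^ 2 = a + b := by simpa [Fin.snoc_last] using h.2 (Fin.last n)
  have hasq : Real.sqrt (a/(a+b)) ^ 2 = a/(a+b) := Real.sq_sqrt (by positivity)
  have hbsq : Real.sqrt (b/(a+b)) ^ 2 = b/(a+b) := Real.sq_sqrt (by positivity)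
  refine ⟨Fin.snoc (Fin.snoc (fun k : Fin n => W' k.castSucc)
      (Real.sqrt (a/(a+b)) • w)) (Real.sqrt (b/(a+b)) • w), ?_, ?_⟩
  · ext l l'
    erw [mulT_apply, Fin.sum_univ_castSucc, Fin.sum_univ_castSucc]
    simp only [Fin.snoc_castSucc, Fin.snoc_last, Pi.smul_apply, smul_eq_mul]
    have key : ∀ u v : Fin r, (1 : Matrix (Fin r) (Fin r) ℝ) u v
        = ∑ i : Fin (n+1), W' i u * W' i v := fun u v => by
      rw [← h.1, mulT_apply W']
    rw [key l l', Fin.sum_univ_castSucc]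
    have h1 : Real.sqrt (a/(a+b)) * w l * (Real.sqrt (a/(a+b)) * w l')
        = (a/(a+b)) * (w l * w l') := by
      rw [mul_mul_mul_comm, Real.mul_self_sqrt (by positivity)]
    have h2 : Real.sqrt (b/(a+b)) * w l * (Real.sqrt (b/(a+b)) * w l')
        = (b/(a+b)) * (w l * w l') := by
      rw [mul_mul_mul_comm, Real.mul_self_sqrt (by positivity)]
    rw [h1, h2, ← hwdef]
    have hone : a/(a+b) + b/(a+b) = 1 := by field_simp
    rw [add_assoc, ← add_mul, hone, one_mul]
  · intro i
    induction i using Fin.lastCases with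
    | last =>
      simp only [Fin.snoc_last, Pi.smul_apply, smul_eq_mul, mul_pow, hbsq]
      rw [← Finset.mul_sum, hw]
      field_simp
      rfl
    | cast k =>
      induction k using Fin.lastCases with
      | last =>
        simp only [Fin.snoc_castSucc, Fin.snoc_last, Pi.smul_apply, smul_eq_mul, mul_pow, hasq]
        rw [← Finset.mul_sum, hw, ← hadef]
        field_simp
      | cast k =>
        simpa [Fin.snoc_castSucc] using h.2 k.castSucc

lemma goodW_mergeB {n r : ℕ} {d : Fin (n+2) → ℝ}
    (ha1 : d (Fin.last n).castSucc ≤ 1) (hb1 : d (Fin.last (n+1)) < 1)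
    (hs : 1 < d (Fin.last n).castSucc + d (Fin.last (n+1)))
    {W' : Matrix (Fin (n+1)) (Fin r) ℝ}
    (h : GoodW (Fin.snoc (fun k : Fin n => d k.castSucc.castSucc)
      (d (Fin.last n).castSucc + d (Fin.last (n+1)) - 1)) W') :
    ∃ W : Matrix (Fin (n+2)) (Fin (r+1)) ℝ, GoodW d W := by
  obtain ⟨W', rfl⟩ : ∃ f : Fin (n+1) → Fin r → ℝ, f = W' := ⟨W', rfl⟩
  set a := d (Fin.last n).castSucc with hadef
  set b := d (Fin.last (n+1)) with hbdef
  have hc : 0 < 2 - (a + b) := by linarith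
  set w := W' (Fin.last n) with hwdef
  have hw : ∑ l, w l ^ 2 = a + b - 1 := by simpa [Fin.snoc_last] using h.2 (Fin.last n)
  set α := Real.sqrt ((1-a)/(2-(a+b))) with hαdef
  set γ := Real.sqrt ((1-b)/(2-(a+b))) with hγdef
  have hα2 : α ^ 2 = (1-a)/(2-(a+b)) := Real.sq_sqrt (by
    apply div_nonneg <;> linarith)
  have hγ2 : γ ^ 2 = (1-b)/(2-(a+b)) := Real.sq_sqrt (by
    apply div_nonneg <;> linarith)
  have hαγ : α ^ 2 + γ ^ 2 = 1 := by
    rw [hα2, hγ2]; field_simp; ring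
  have hrowa : α ^ 2 * (a + b - 1) + γ ^ 2 = a := by
    rw [hα2, hγ2]; field_simp; ring
  have hrowb : γ ^ 2 * (a + b - 1) + α ^ 2 = b := by
    rw [hα2, hγ2]; field_simp; ring
  refine ⟨Fin.snoc (Fin.snoc (fun k : Fin n => Fin.snoc (W' k.castSucc) 0)
      (Fin.snoc (α • w) (-γ))) (Fin.snoc (γ • w) α), ?_, ?_⟩
  · ext l l'
    erw [mulT_apply, Fin.sum_univ_castSucc, Fin.sum_univ_castSucc]
    simp only [Fin.snoc_castSucc, Fin.snoc_last]
    have key : ∀ u v : Fin r, (1 : Matrix (Fin r) (Fin r) ℝ) u v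
        = ∑ i : Fin (n+1), W' i u * W' i v := fun u v => by
      rw [← h.1, mulT_apply W']
    induction l using Fin.lastCases with
    | last =>
      induction l' using Fin.lastCases with
      | last =>
        simp only [Fin.snoc_last, Matrix.one_apply_eq, Pi.zero_apply, mul_zero, zero_mul]
        simp only [Finset.sum_const_zero, zero_add]
        nlinarith [hαγ]
      | cast v =>
        simp only [Fin.snoc_last, Fin.snoc_castSucc, Pi.smul_apply, smul_eq_mul,
          Pi.zero_apply, zero_mul, Finset.sum_const_zero, zero_add]
        rw [Matrix.one_apply_ne (Fin.castSucc_lt_last v).ne']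
        ring
    | cast u =>
      induction l' using Fin.lastCases with
      | last =>
        simp only [Fin.snoc_last, Fin.snoc_castSucc, Pi.smul_apply, smul_eq_mul,
          Pi.zero_apply, mul_zero, Finset.sum_const_zero, zero_add]
        rw [Matrix.one_apply_ne (Fin.castSucc_lt_last u).ne]
        ring
      | cast v =>
        simp only [Fin.snoc_castSucc, Pi.smul_apply, smul_eq_mul]
        have h1 : (1 : Matrix (Fin (r+1)) (Fin (r+1)) ℝ) u.castSucc v.castSucc
            = (1 : Matrix (Fin r) (Fin r) ℝ) u v := by
          simp [Matrix.one_apply, Fin.castSucc_inj]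
        rw [h1, key, Fin.sum_univ_castSucc]
        have h2 : α * w u * (α * w v) + γ * w u * (γ * w v)
            = (α ^ 2 + γ ^ 2) * (w u * w v) := by ring
        rw [add_assoc, h2, hαγ, one_mul, ← hwdef]
  · intro i
    induction i using Fin.lastCases with
    | last =>
      rw [Fin.snoc_last, Fin.sum_univ_castSucc]
      simp only [Fin.snoc_castSucc, Fin.snoc_last, Pi.smul_apply, smul_eq_mul, mul_pow]
      rw [← Finset.mul_sum, hw]
      exact hrowb
    | cast k =>
      induction k using Fin.lastCases with
      | last =>
        rw [Fin.snoc_castSucc, Fin.snoc_last, Fin.sum_univ_castSucc]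
        simp only [Fin.snoc_castSucc, Fin.snoc_last, Pi.smul_apply, smul_eq_mul, mul_pow]
        rw [← Finset.mul_sum, hw]
        have : (-γ) ^ 2 = γ ^ 2 := by ring
        rw [this]
        exact hrowa
      | cast k =>
        rw [Fin.snoc_castSucc, Fin.snoc_castSucc, Fin.sum_univ_castSucc]
        simp only [Fin.snoc_castSucc, Fin.snoc_last]
        simpa [Fin.snoc_castSucc] using h.2 k.castSucc

lemma frame_exists : ∀ (n : ℕ) (r : ℕ) (d : Fin n → ℝ), (∀ i, 0 ≤ d i) → (∀ i, d i ≤ 1) →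
    ((∑ i, d i) = (r : ℝ)) → ∃ W : Matrix (Fin n) (Fin r) ℝ, GoodW d W := by
  intro n
  induction n with
  | zero =>
    intro r d _ _ hs
    have hr : (r : ℝ) = 0 := by simpa using hs.symm
    have : r = 0 := by exact_mod_cast hr
    subst this
    exact ⟨0, Subsingleton.elim _ _, fun i => i.elim0⟩
  | succ n IH =>
    intro r d h0 h1 hs
    have hsum : ∑ i : Fin n, d i.castSucc + d (Fin.last n) = (r : ℝ) := by
      rw [← Fin.sum_univ_castSucc]; exact hs
    rcases eq_or_lt_of_le (h0 (Fin.last n)) with hz | hp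
    · -- last entry is zero
      obtain ⟨W', hW'⟩ := IH r (fun k => d k.castSucc) (fun i => h0 _) (fun i => h1 _)
        (by rw [← hz] at hsum; linarith)
      exact goodW_dropZero hz.symm hW'
    rcases eq_or_lt_of_le (h1 (Fin.last n)) with ho | hb1
    · -- last entry is one
      have h1r : (1:ℝ) ≤ r := by
        rw [← hs, ← ho]
        exact Finset.single_le_sum (fun i _ => h0 i) (Finset.mem_univ _)
      obtain ⟨r', rfl⟩ : ∃ r', r = r' + 1 := ⟨r - 1, by
        have : 1 ≤ r := by exact_mod_cast h1r
        omega⟩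
      obtain ⟨W', hW'⟩ := IH r' (fun k => d k.castSucc) (fun i => h0 _) (fun i => h1 _)
        (by push_cast at hsum ⊢; rw [ho] at hsum; linarith)
      exact goodW_dropOne ho hW'
    -- 0 < d last < 1
    cases n with
    | zero =>
      exfalso
      have h01 : d (Fin.last 0) = (r : ℝ) := by
        rw [← hs]; simp [Fin.sum_univ_one]
      rcases Nat.eq_zero_or_pos r with h | h
      · rw [h01, h] at hp; simp at hp
      · have : (1:ℝ) ≤ r := by exact_mod_cast h
        rw [h01] at hb1; linarith
    | succ m =>
      have hsum2 : ∑ k : Fin m, d k.castSucc.castSucc + d (Fin.last m).castSucc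
          + d (Fin.last (m+1)) = (r : ℝ) := by
        rw [← Fin.sum_univ_castSucc (f := fun i : Fin (m+1) => d i.castSucc),
          ← Fin.sum_univ_castSucc]
        exact hs
      set a := d (Fin.last m).castSucc with hadef
      set b := d (Fin.last (m+1)) with hbdef
      have hbnds : ∀ t : ℝ, 0 ≤ t → t ≤ 1 →
          (∀ i, 0 ≤ (Fin.snoc (fun k : Fin m => d k.castSucc.castSucc) t : Fin (m+1) → ℝ) i) ∧
          (∀ i, (Fin.snoc (fun k : Fin m => d k.castSucc.castSucc) t : Fin (m+1) → ℝ) i ≤ 1) := by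
        intro t ht0 ht1
        constructor
        · intro i
          induction i using Fin.lastCases with
          | last => simpa [Fin.snoc_last]
          | cast k => simpa [Fin.snoc_castSucc] using h0 k.castSucc.castSucc
        · intro i
          induction i using Fin.lastCases with
          | last => simpa [Fin.snoc_last]
          | cast k => simpa [Fin.snoc_castSucc] using h1 k.castSucc.castSucc
      have hsnocsum : ∀ t : ℝ, ∑ i, (Fin.snoc (fun k : Fin m => d k.castSucc.castSucc) t : Fin (m+1) → ℝ) i
          = ∑ k : Fin m, d k.castSucc.castSucc + t := by
        intro t
        rw [Fin.sum_univ_castSucc]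
        simp [Fin.snoc_castSucc, Fin.snoc_last]
      rcases le_or_gt (a + b) 1 with hab | hab
      · obtain ⟨hb0, hb1'⟩ := hbnds (a+b) (by linarith [h0 (Fin.last m).castSucc]) hab
        obtain ⟨W', hW'⟩ := IH r _ hb0 hb1' (by rw [hsnocsum]; linarith)
        exact goodW_mergeA (h0 _) hp hW'
      · have h2r : (1:ℝ) < r := by
          rw [← hsum2] at *
          have : 0 ≤ ∑ k : Fin m, d k.castSucc.castSucc :=
            Finset.sum_nonneg (fun i _ => h0 _)
          linarith
        obtain ⟨r', rfl⟩ : ∃ r', r = r' + 1 := ⟨r - 1, by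
          have : 1 < (r:ℕ) := by exact_mod_cast h2r
          omega⟩
        obtain ⟨hb0, hb1'⟩ := hbnds (a+b-1) (by linarith)
          (by linarith [h1 (Fin.last m).castSucc])
        obtain ⟨W', hW'⟩ := IH r' _ hb0 hb1' (by rw [hsnocsum]; push_cast at hsum2 ⊢; linarith)
        exact goodW_mergeB (h1 _) hb1 hab hW'

lemma trace_eq_rank {n : ℕ} (P : Matrix (Fin n) (Fin n) ℝ) (hP : P * P = P) :
    P.trace = (P.rank : ℝ) := by
  have hproj : LinearMap.IsProj (LinearMap.range P.mulVecLin) P.mulVecLin := by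
    constructor
    · exact fun x => LinearMap.mem_range_self _ x
    · rintro x ⟨y, rfl⟩
      have h2 : P.mulVecLin ∘ₗ P.mulVecLin = P.mulVecLin := by
        rw [← Matrix.mulVecLin_mul, hP]
      exact LinearMap.ext_iff.mp h2 y
  have ht := hproj.trace
  rw [LinearMap.trace_eq_matrix_trace ℝ (Pi.basisFun ℝ (Fin n)),
    LinearMap.toMatrix_eq_toMatrix'] at ht
  rw [show LinearMap.toMatrix' P.mulVecLin = P from by
    rw [← Matrix.toLin'_apply' P, LinearMap.toMatrix'_toLin']] at ht
  rw [ht, Matrix.rank]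

lemma trace_formula {n : ℕ} (x : Fin n → Fin n → ℝ) (hpos : ∀ i, 0 < x i ⬝ᵥ x i)
    (horth : ∀ i j, i ≠ j → x i ⬝ᵥ x j = 0) (P : Matrix (Fin n) (Fin n) ℝ) :
    P.trace = ∑ i, (x i ⬝ᵥ P *ᵥ x i) / (x i ⬝ᵥ x i) := by
  set V : Matrix (Fin n) (Fin n) ℝ :=
    Matrix.of (fun i a => (Real.sqrt (x i ⬝ᵥ x i))⁻¹ * x i a) with hV
  have hc : ∀ i, (Real.sqrt (x i ⬝ᵥ x i))⁻¹ * (Real.sqrt (x i ⬝ᵥ x i))⁻¹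
      = (x i ⬝ᵥ x i)⁻¹ := fun i => by
    rw [← mul_inv, Real.mul_self_sqrt (le_of_lt (hpos i))]
  have hVV : V * Vᵀ = 1 := by
    ext i j
    rw [Matrix.mul_apply]
    simp only [hV, transpose_apply, Matrix.of_apply]
    rcases eq_or_ne i j with rfl | hij
    · rw [Matrix.one_apply_eq]
      have : ∀ a, (Real.sqrt (x i ⬝ᵥ x i))⁻¹ * x i a * ((Real.sqrt (x i ⬝ᵥ x i))⁻¹ * x i a)
          = (x i ⬝ᵥ x i)⁻¹ * (x i a * x i a) := fun a => by rw [← hc i]; ring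
      rw [Finset.sum_congr rfl (fun a _ => this a), ← Finset.mul_sum]
      have : ∑ a, x i a * x i a = x i ⬝ᵥ x i := rfl
      rw [this, inv_mul_cancel₀ (hpos i).ne']
    · rw [Matrix.one_apply_ne hij]
      have : ∀ a, (Real.sqrt (x i ⬝ᵥ x i))⁻¹ * x i a * ((Real.sqrt (x j ⬝ᵥ x j))⁻¹ * x j a)
          = ((Real.sqrt (x i ⬝ᵥ x i))⁻¹ * (Real.sqrt (x j ⬝ᵥ x j))⁻¹) * (x i a * x j a) :=
        fun a => by ring
      rw [Finset.sum_congr rfl (fun a _ => this a), ← Finset.mul_sum]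
      have : ∑ a, x i a * x j a = x i ⬝ᵥ x j := rfl
      rw [this, horth i j hij, mul_zero]
  have hVtV : Vᵀ * V = 1 := mul_eq_one_comm.mp hVV
  calc P.trace = (Vᵀ * V * P).trace := by rw [hVtV, one_mul]
    _ = (V * P * Vᵀ).trace := by
        rw [Matrix.mul_assoc, Matrix.trace_mul_comm, Matrix.mul_assoc]
    _ = ∑ i, (x i ⬝ᵥ P *ᵥ x i) / (x i ⬝ᵥ x i) := by
        rw [Matrix.trace]
        refine Finset.sum_congr rfl (fun i _ => ?_)
        have hci := hc i
        simp only [Matrix.diag_apply, Matrix.mul_apply, hV, transpose_apply, Matrix.of_apply]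
        set s := x i ⬝ᵥ x i with hs
        simp only [dotProduct, Matrix.mulVec, div_eq_mul_inv,
          Finset.sum_mul, Finset.mul_sum]
        rw [Finset.sum_comm]
        refine Finset.sum_congr rfl (fun b _ => ?_)
        refine Finset.sum_congr rfl (fun a _ => ?_)
        rw [← hci]; ring

/-- Let x_1,…,x_n ∈ ℝ^n be nonzero pairwise orthogonal vectors with
min_i ‖x_i‖² > (r/n)·H, H the harmonic mean of the squared norms. Then for any
rank-≤r orthogonal projection P on ℝ^n, min_i x_iᵀPx_i ≤ (r/n)·H; and the bound is
attained by some semi-orthogonal U with P = UUᵀ whose rows in the normalized target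
basis have squared norms (r/n)·H/‖x_i‖². -/

theorem stmt17 (n r : ℕ) [NeZero n] (hrn : r ≤ n) (x : Fin n → Fin n → ℝ)
    (hx0 : ∀ i, x i ≠ 0)
    (horth : ∀ i j, i ≠ j → x i ⬝ᵥ x j = 0)
    (H : ℝ) (hH : H = (n : ℝ) / ∑ i, 1 / (x i ⬝ᵥ x i))
    (hmin : ∀ i, ((r : ℝ) / n) * H < x i ⬝ᵥ x i) :
    (∀ P : Matrix (Fin n) (Fin n) ℝ, Pᵀ = P → P * P = P → P.rank ≤ r →
      ∃ i, x i ⬝ᵥ P *ᵥ x i ≤ ((r : ℝ) / n) * H) ∧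
    (∃ U : Matrix (Fin n) (Fin r) ℝ, Uᵀ * U = 1 ∧
      (∀ i, x i ⬝ᵥ (U * Uᵀ) *ᵥ x i = ((r : ℝ) / n) * H) ∧
      (∀ i, ∑ l : Fin r,
          (((Real.sqrt (x i ⬝ᵥ x i))⁻¹ • x i) ⬝ᵥ (fun a => U a l)) ^ 2
        = ((r : ℝ) / n) * H / (x i ⬝ᵥ x i))) := by
  have hpos : ∀ i, 0 < x i ⬝ᵥ x i := by
    intro i
    rcases (Finset.sum_nonneg (fun a _ => mul_self_nonneg (x i a)) :
        0 ≤ x i ⬝ᵥ x i).lt_or_eq with h | h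
    · exact h
    · exact absurd (dotProduct_self_eq_zero.mp h.symm) (hx0 i)
  have hn : (n : ℝ) ≠ 0 := Nat.cast_ne_zero.mpr (NeZero.ne n)
  set S := ∑ i, 1 / (x i ⬝ᵥ x i) with hSdef
  have hS0 : 0 < S := Finset.sum_pos (fun i _ => by
    have := hpos i; positivity) Finset.univ_nonempty
  set c := ((r : ℝ) / n) * H with hcdef
  have hcS : c = r / S := by rw [hcdef, hH]; field_simp
  have hc0 : 0 ≤ c := by rw [hcS]; positivity
  have hsum_c : ∑ i, c / (x i ⬝ᵥ x i) = r := by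
    have : ∀ i, c / (x i ⬝ᵥ x i) = c * (1 / (x i ⬝ᵥ x i)) := fun i => by
      rw [mul_one_div]
    rw [Finset.sum_congr rfl (fun i _ => this i), ← Finset.mul_sum, ← hSdef, hcS]
    field_simp
  constructor
  · intro P hsym hidem hrank
    by_contra hcon
    push_neg at hcon
    have htr := trace_formula x hpos horth P
    have hrk := trace_eq_rank P hidem
    have hlt : ∑ i, c / (x i ⬝ᵥ x i) < ∑ i, (x i ⬝ᵥ P *ᵥ x i) / (x i ⬝ᵥ x i) :=
      Finset.sum_lt_sum_of_nonempty Finset.univ_nonempty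
        (fun i _ => by exact div_lt_div_of_pos_right (hcon i) (hpos i))
    have hrle : (P.rank : ℝ) ≤ r := Nat.cast_le.mpr hrank
    rw [hsum_c] at hlt
    rw [htr] at hrk
    linarith
  · obtain ⟨W, hW1, hW2⟩ := frame_exists n r (fun i => c / (x i ⬝ᵥ x i))
      (fun i => div_nonneg hc0 (hpos i).le)
      (fun i => le_of_lt ((div_lt_one (hpos i)).mpr (hmin i)))
      hsum_c
    set U : Matrix (Fin n) (Fin r) ℝ :=
      Matrix.of (fun a l => ∑ i, W i l * ((Real.sqrt (x i ⬝ᵥ x i))⁻¹ * x i a)) with hUdef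
    have hsqrt_pos : ∀ i, 0 < Real.sqrt (x i ⬝ᵥ x i) :=
      fun i => Real.sqrt_pos.mpr (hpos i)
    have key : ∀ i l, (∑ a, x i a * U a l) = Real.sqrt (x i ⬝ᵥ x i) * W i l := by
      intro i l
      have e1 : ∀ a, x i a * U a l
          = ∑ j, W j l * ((Real.sqrt (x j ⬝ᵥ x j))⁻¹ * (x i a * x j a)) := by
        intro a
        simp only [hUdef, Matrix.of_apply, Finset.mul_sum]
        exact Finset.sum_congr rfl (fun j _ => by ring)
      rw [Finset.sum_congr rfl (fun a _ => e1 a), Finset.sum_comm]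
      have e2 : ∀ j, (∑ a, W j l * ((Real.sqrt (x j ⬝ᵥ x j))⁻¹ * (x i a * x j a)))
          = W j l * ((Real.sqrt (x j ⬝ᵥ x j))⁻¹ * (x i ⬝ᵥ x j)) := by
        intro j
        rw [← Finset.mul_sum]
        congr 1
        rw [← Finset.mul_sum]
        rfl
      rw [Finset.sum_congr rfl (fun j _ => e2 j), Finset.sum_eq_single i]
      · have h5 : (Real.sqrt (x i ⬝ᵥ x i))⁻¹ * (x i ⬝ᵥ x i) = Real.sqrt (x i ⬝ᵥ x i) := by
          rw [inv_mul_eq_div, eq_comm, eq_div_iff (hsqrt_pos i).ne',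
            Real.mul_self_sqrt (hpos i).le]
        rw [h5]; ring
      · intro j _ hj
        rw [horth i j (Ne.symm hj), mul_zero, mul_zero]
      · intro h; exact absurd (Finset.mem_univ i) h
    have hUtU : Uᵀ * U = 1 := by
      ext l l'
      rw [Matrix.mul_apply]
      simp only [transpose_apply]
      have e1 : ∀ a, U a l * U a l'
          = ∑ j, W j l * ((Real.sqrt (x j ⬝ᵥ x j))⁻¹ * (x j a * U a l')) := by
        intro a
        nth_rewrite 1 [hUdef]
        simp only [Matrix.of_apply, Finset.sum_mul]
        exact Finset.sum_congr rfl (fun j _ => by ring)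
      rw [Finset.sum_congr rfl (fun a _ => e1 a), Finset.sum_comm]
      have e2 : ∀ j, (∑ a, W j l * ((Real.sqrt (x j ⬝ᵥ x j))⁻¹ * (x j a * U a l')))
          = W j l * W j l' := by
        intro j
        rw [← Finset.mul_sum]
        have : ∑ a, (Real.sqrt (x j ⬝ᵥ x j))⁻¹ * (x j a * U a l')
            = (Real.sqrt (x j ⬝ᵥ x j))⁻¹ * ∑ a, x j a * U a l' := by
          rw [← Finset.mul_sum]
        rw [this, key j l']
        have h6 := (hsqrt_pos j).ne'
        field_simp
      rw [Finset.sum_congr rfl (fun j _ => e2 j)]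
      rw [← mulT_apply, hW1]
    refine ⟨U, hUtU, ?_, ?_⟩
    · intro i
      have h1 : x i ⬝ᵥ (U * Uᵀ) *ᵥ x i = (Uᵀ *ᵥ x i) ⬝ᵥ (Uᵀ *ᵥ x i) := by
        rw [← Matrix.mulVec_mulVec, Matrix.dotProduct_mulVec, Matrix.mulVec_transpose]
      rw [h1]
      have h2 : ∀ l, (Uᵀ *ᵥ x i) l = Real.sqrt (x i ⬝ᵥ x i) * W i l := by
        intro l
        rw [Matrix.mulVec_transpose]
        have : (x i ᵥ* U) l = ∑ a, x i a * U a l := rfl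
        rw [this, key]
      rw [dotProduct]
      have h3 : ∀ l, (Uᵀ *ᵥ x i) l * (Uᵀ *ᵥ x i) l
          = (x i ⬝ᵥ x i) * (W i l ^ 2) := by
        intro l
        rw [h2 l]
        have := Real.mul_self_sqrt (hpos i).le
        nlinarith [this]
      rw [Finset.sum_congr rfl (fun l _ => h3 l), ← Finset.mul_sum, hW2 i]
      show x i ⬝ᵥ x i * (c / (x i ⬝ᵥ x i)) = c
      rw [mul_comm, div_mul_cancel₀ c (hpos i).ne']
    · intro i
      have h4 : ∀ l : Fin r, ((Real.sqrt (x i ⬝ᵥ x i))⁻¹ • x i) ⬝ᵥ (fun a => U a l) = W i l := by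
        intro l
        rw [smul_dotProduct]
        have : (x i ⬝ᵥ fun a => U a l) = ∑ a, x i a * U a l := rfl
        rw [this, key, smul_eq_mul, ← mul_assoc, inv_mul_cancel₀ (hsqrt_pos i).ne', one_mul]
      have h7 : ∀ l : Fin r, (((Real.sqrt (x i ⬝ᵥ x i))⁻¹ • x i) ⬝ᵥ (fun a => U a l)) ^ 2
          = W i l ^ 2 := fun l => by rw [h4 l]
      rw [Finset.sum_congr rfl (fun l _ => h7 l), hW2 i]
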